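/- Let N ≥ 2, let b₁,…,b_N be real numbers that are not all equal, and suppose at least one value, say b₁, is repeated with multiplicity α₁ satisfying 1 < α₁ < N. Let A(r) = A⁰ ∏_k (r−b_k)^{−1} with A⁰ ∈ ℝ, and suppose that for some index i with b_i ≠ b₁ there exist constants W⁰_{ij} such that −2A(r) = ∑_{j≠i} (r−b_j)^{−1} [ 2∫A(r)dr + W⁰_{ij} ] holds identically in r on an interval avoiding all b_k (for some choice of antiderivative of A). Then A⁰ = 0. -/

import Mathlib

open Polynomial

private lemma stmt15_deriv_prod_XC {ι : Type*} [DecidableEq ι] (s : Finset ι) (c : ι → ℝ) :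
    derivative (∏ j ∈ s, (X - C (c j))) =
      ∑ j ∈ s, ∏ k ∈ s.erase j, (X - C (c k)) := by
  induction s using Finset.induction_on with
  | empty => simp
  | @insert a s ha ih =>
    rw [Finset.prod_insert ha, derivative_mul, ih, Finset.sum_insert ha,
      Finset.erase_insert ha]
    simp only [derivative_sub, derivative_X, derivative_C, sub_zero, one_mul]
    rw [Finset.mul_sum]
    congr 1
    refine Finset.sum_congr rfl fun j hj => ?_
    rw [Finset.erase_insert_of_ne (by rintro rfl; exact ha hj),
      Finset.prod_insert (fun h => ha (Finset.mem_of_mem_erase h))]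

/-- Pole-comparison argument of section 4.1.3 (eq. constrW2): with a repeated value β of
multiplicity 1 < α₁ < N among the bₖ and an index i with bᵢ ≠ β, the identity
−2A = ∑_{j≠i} (r−bⱼ)⁻¹ (2∫A + W⁰ᵢⱼ) for A = A⁰∏(r−bₖ)⁻¹ forces A⁰ = 0. -/
theorem stmt15 {N : ℕ} (hN : 2 ≤ N) (b : Fin N → ℝ) (β : ℝ) (α₁ : ℕ)
    (hmult : (Finset.univ.filter (fun k => b k = β)).card = α₁)
    (hα₁ : 1 < α₁) (hα₁' : α₁ < N)
    (A0 : ℝ) (i : Fin N) (hi : b i ≠ β)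
    (W0 : Fin N → ℝ) (F : ℝ → ℝ) (s t : ℝ) (hst : s < t)
    (havoid : ∀ k, b k ∉ Set.Ioo s t)
    (hF : ∀ r ∈ Set.Ioo s t, HasDerivAt F (A0 * ∏ k, (r - b k)⁻¹) r)
    (hid : ∀ r ∈ Set.Ioo s t,
      -2 * (A0 * ∏ k, (r - b k)⁻¹) =
        ∑ j ∈ Finset.univ.erase i, (r - b j)⁻¹ * (2 * F r + W0 j)) :
    A0 = 0 := by
  classical
  set I : Finset (Fin N) := Finset.univ.erase i with hI
  have hne : ∀ r ∈ Set.Ioo s t, ∀ k, r - b k ≠ 0 := by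
    intro r hr k h
    exact havoid k (by rw [sub_eq_zero] at h; rwa [← h])
  -- polynomials
  set T : ℝ[X] := X - C β with hT
  set μ : ℝ[X] := ∏ j ∈ I, (X - C (b j)) with hμ
  set Dp : ℝ[X] := -∑ j ∈ I, C (W0 j) * ∏ k ∈ I.erase j, (X - C (b k)) with hDp
  set g : ℝ[X] := (X - C (b i)) * Dp - C (2 * A0) with hg
  set p₁ : ℝ[X] := (X - C (b i)) * derivative μ with hp₁
  set p₂ : ℝ[X] := μ * g with hp₂
  have hμeval : ∀ r : ℝ, μ.eval r = ∏ j ∈ I, (r - b j) := by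
    intro r; simp [hμ, eval_prod]
  have hμ'eval : ∀ r : ℝ, (derivative μ).eval r = ∑ j ∈ I, ∏ k ∈ I.erase j, (r - b k) := by
    intro r; rw [hμ, stmt15_deriv_prod_XC]; simp [eval_finset_sum, eval_prod]
  have hDeval : ∀ r : ℝ, Dp.eval r = -∑ j ∈ I, W0 j * ∏ k ∈ I.erase j, (r - b k) := by
    intro r; simp [hDp, eval_finset_sum, eval_prod]
  -- Step A : pointwise algebraic identity from hid
  have hA : ∀ r ∈ Set.Ioo s t,
      (derivative μ).eval r * (2 * F r) = Dp.eval r - 2 * A0 * (r - b i)⁻¹ := by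
    intro r hr
    have h0 := hid r hr
    have hbi : r - b i ≠ 0 := hne r hr i
    have hμne : μ.eval r ≠ 0 := by
      rw [hμeval]
      exact Finset.prod_ne_zero_iff.2 fun j _ => hne r hr j
    -- multiply hid by μ.eval r
    have hprodall : (∏ k, (r - b k)) = (r - b i) * μ.eval r := by
      rw [hμeval]; exact (Finset.mul_prod_erase Finset.univ _ (Finset.mem_univ i)).symm
    have hLHS : -2 * (A0 * ∏ k, (r - b k)⁻¹) * μ.eval r = -2 * A0 * (r - b i)⁻¹ := by
      rw [Finset.prod_inv_distrib, hprodall]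
      field_simp
    have hRHS : (∑ j ∈ I, (r - b j)⁻¹ * (2 * F r + W0 j)) * μ.eval r
        = (derivative μ).eval r * (2 * F r) + ∑ j ∈ I, W0 j * ∏ k ∈ I.erase j, (r - b k) := by
      rw [Finset.sum_mul, hμ'eval, Finset.sum_mul, ← Finset.sum_add_distrib]
      refine Finset.sum_congr rfl fun j hj => ?_
      have hjr : r - b j ≠ 0 := hne r hr j
      have : μ.eval r = (r - b j) * ∏ k ∈ I.erase j, (r - b k) := by
        rw [hμeval]; exact (Finset.mul_prod_erase I _ hj).symm
      rw [this]
      field_simp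
    have := congrArg (· * μ.eval r) h0
    rw [hLHS, hRHS] at this
    rw [hDeval]
    linarith [this]
  -- key pointwise product identity
  have keyfun : ∀ r ∈ Set.Ioo s t, μ.eval r * (2 * F r) * p₁.eval r = p₂.eval r := by
    intro r hr
    have hbi : r - b i ≠ 0 := hne r hr i
    have h1 := hA r hr
    have h2 : (r - b i) * ((derivative μ).eval r * (2 * F r))
        = (r - b i) * Dp.eval r - 2 * A0 := by
      rw [h1]; field_simp
    simp only [hp₁, hp₂, hg, eval_mul, eval_sub, eval_X, eval_C]
    linear_combination (μ.eval r) * h2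
  -- derivative of φ = μ * 2F is Dp
  have hφ : ∀ r ∈ Set.Ioo s t,
      HasDerivAt (fun x => μ.eval x * (2 * F x)) (Dp.eval r) r := by
    intro r hr
    have hbi : r - b i ≠ 0 := hne r hr i
    have hG : HasDerivAt (fun x => 2 * F x) (2 * (A0 * ∏ k, (r - b k)⁻¹)) r :=
      (hF r hr).const_mul 2
    have h := (μ.hasDerivAt r).mul hG
    have hval : (derivative μ).eval r * (2 * F r) + μ.eval r * (2 * (A0 * ∏ k, (r - b k)⁻¹))
        = Dp.eval r := by
      have hμne : μ.eval r ≠ 0 := by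
        rw [hμeval]; exact Finset.prod_ne_zero_iff.2 fun j _ => hne r hr j
      have hprodall : (∏ k, (r - b k)) = (r - b i) * μ.eval r := by
        rw [hμeval]; exact (Finset.mul_prod_erase Finset.univ _ (Finset.mem_univ i)).symm
      have hinv : μ.eval r * (A0 * ∏ k, (r - b k)⁻¹) = A0 * (r - b i)⁻¹ := by
        rw [Finset.prod_inv_distrib, hprodall]
        field_simp
      rw [hA r hr]
      nlinarith [hinv]
    rw [← hval]
    exact h
  -- derivative comparison on Ioo
  have hDcomp : ∀ r ∈ Set.Ioo s t,
      Dp.eval r * p₁.eval r + μ.eval r * (2 * F r) * (derivative p₁).eval r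
        = (derivative p₂).eval r := by
    intro r hr
    have h1 : HasDerivAt (fun x => μ.eval x * (2 * F x) * p₁.eval x)
        (Dp.eval r * p₁.eval r + μ.eval r * (2 * F r) * (derivative p₁).eval r) r :=
      (hφ r hr).mul (p₁.hasDerivAt r)
    have heq : (fun x => p₂.eval x) =ᶠ[nhds r] (fun x => μ.eval x * (2 * F x) * p₁.eval x) := by
      filter_upwards [isOpen_Ioo.mem_nhds hr] with x hx
      exact (keyfun x hx).symm
    have h2 : HasDerivAt (fun x => p₂.eval x)
        (Dp.eval r * p₁.eval r + μ.eval r * (2 * F r) * (derivative p₁).eval r) r :=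
      h1.congr_of_eventuallyEq heq
    exact h2.unique (p₂.hasDerivAt r)
  -- global polynomial identity
  have hpoly : Dp * p₁ ^ 2 + p₂ * derivative p₁ = derivative p₂ * p₁ := by
    apply Polynomial.eq_of_infinite_eval_eq
    apply (Set.Ioo_infinite hst).mono
    intro r hr
    have h1 := hDcomp r hr
    have h2 := keyfun r hr
    simp only [Set.mem_setOf_eq, eval_add, eval_mul, eval_pow]
    linear_combination (p₁.eval r) * h1 - ((derivative p₁).eval r) * h2
  -- algebraic endgame
  obtain ⟨m, hm⟩ : ∃ m, α₁ = m + 2 := ⟨α₁ - 2, by omega⟩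
  subst hm
  have hfilt : I.filter (fun j => b j = β) = Finset.univ.filter (fun k => b k = β) := by
    ext j
    simp only [hI, Finset.mem_filter, Finset.mem_erase, Finset.mem_univ, true_and, and_true]
    constructor
    · rintro ⟨_, h⟩; exact h
    · intro h; exact ⟨fun hji => hi (hji ▸ h), h⟩
  have hcI : (I.filter (fun j => b j = β)).card = m + 2 := by rw [hfilt, hmult]
  set ν : ℝ[X] := ∏ j ∈ I.filter (fun j => ¬ b j = β), (X - C (b j)) with hν
  have hμfact : μ = T ^ (m + 2) * ν := by
    rw [hμ, ← Finset.prod_filter_mul_prod_filter_not I (fun j => b j = β)]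
    congr 1
    have h1 : ∏ j ∈ I.filter (fun j => b j = β), (X - C (b j))
        = ∏ _j ∈ I.filter (fun j => b j = β), (X - C β) :=
      Finset.prod_congr rfl fun j hj => by rw [(Finset.mem_filter.1 hj).2]
    rw [h1, Finset.prod_const, hcI]
  have hνβ : ν.eval β ≠ 0 := by
    rw [hν]
    simp only [eval_prod, eval_sub, eval_X, eval_C]
    exact Finset.prod_ne_zero_iff.2 fun j hj =>
      sub_ne_zero.2 fun h => (Finset.mem_filter.1 hj).2 h.symm
  obtain ⟨Dt, hDt⟩ : T ^ (m + 1) ∣ Dp := by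
    rw [hDp, dvd_neg]
    refine Finset.dvd_sum fun j hj => dvd_mul_of_dvd_right ?_ _
    have hsub : (I.filter (fun k => b k = β)).erase j ⊆ I.erase j :=
      Finset.erase_subset_erase _ (Finset.filter_subset _ _)
    have hcard : m + 1 ≤ ((I.filter (fun k => b k = β)).erase j).card := by
      have := Finset.pred_card_le_card_erase
        (s := I.filter (fun k => b k = β)) (a := j)
      omega
    calc T ^ (m + 1) ∣ T ^ ((I.filter (fun k => b k = β)).erase j).card :=
          pow_dvd_pow T hcard
      _ = ∏ k ∈ (I.filter (fun k => b k = β)).erase j, (X - C (b k)) := by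
          have h1 : ∏ k ∈ (I.filter (fun k => b k = β)).erase j, (X - C (b k))
              = ∏ _k ∈ (I.filter (fun k => b k = β)).erase j, (X - C β) :=
            Finset.prod_congr rfl fun k hk => by
              rw [(Finset.mem_filter.1 (Finset.mem_of_mem_erase hk)).2]
          rw [h1, Finset.prod_const]
      _ ∣ ∏ k ∈ I.erase j, (X - C (b k)) := Finset.prod_dvd_prod_of_subset _ _ _ hsub
  have hTβ : T.eval β = 0 := by rw [hT]; simp
  have hTd : derivative T = 1 := by rw [hT]; simp
  set w : ℝ[X] := (X - C (b i)) * (C (((m + 2 : ℕ) : ℝ)) * ν + T * derivative ν) with hw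
  have hμ'fact : derivative μ
      = T ^ (m + 1) * (C (((m + 2 : ℕ) : ℝ)) * ν + T * derivative ν) := by
    rw [hμfact, derivative_mul, derivative_pow, hTd]
    rw [show m + 2 - 1 = m + 1 from rfl]
    ring
  have hp₁fact : p₁ = T ^ (m + 1) * w := by rw [hp₁, hμ'fact, hw]; ring
  set p₁d : ℝ[X] := C (((m + 1 : ℕ) : ℝ)) * w + T * derivative w with hp₁d
  have hp₁' : derivative p₁ = T ^ m * p₁d := by
    rw [hp₁fact, derivative_mul, derivative_pow, hTd]
    rw [show m + 1 - 1 = m from rfl, hp₁d]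
    ring
  have hp₂fact : p₂ = T ^ (m + 2) * (ν * g) := by rw [hp₂, hμfact]; ring
  set u : ℝ[X] := C (((m + 2 : ℕ) : ℝ)) * (ν * g) + T * derivative (ν * g) with hu
  have hp₂' : derivative p₂ = T ^ (m + 1) * u := by
    rw [hp₂fact, derivative_mul, derivative_pow, hTd]
    rw [show m + 2 - 1 = m + 1 from rfl, hu]
    ring
  have e : T ^ (m + 1) * Dt * (T ^ (m + 1) * w) ^ 2
      + (T ^ (m + 2) * (ν * g)) * (T ^ m * p₁d)
      = (T ^ (m + 1) * u) * (T ^ (m + 1) * w) := by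
    rw [← hDt, ← hp₁fact, ← hp₁', ← hp₂fact, ← hp₂']
    exact hpoly
  have e2 : T ^ (2 * m + 2) * (T ^ (m + 1) * Dt * w ^ 2 + ν * g * p₁d)
      = T ^ (2 * m + 2) * (u * w) := by linear_combination e
  have hTne : T ≠ 0 := X_sub_C_ne_zero β
  have e3 : T ^ (m + 1) * Dt * w ^ 2 + ν * g * p₁d = u * w :=
    mul_left_cancel₀ (pow_ne_zero _ hTne) e2
  -- evaluate at β
  have hDpβ : Dp.eval β = 0 := by
    rw [hDt, eval_mul, eval_pow, hTβ, zero_pow (Nat.succ_ne_zero m), zero_mul]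
  have hgβ : g.eval β = -(2 * A0) := by
    rw [hg]; simp [hDpβ]
  have e4 := congrArg (eval β) e3
  simp only [eval_add, eval_mul, eval_pow, hTβ, hp₁d, hu, hgβ, eval_C,
    zero_pow (Nat.succ_ne_zero m), zero_mul, mul_zero, zero_add, add_zero] at e4
  have hwβ : w.eval β = (β - b i) * (((m + 2 : ℕ) : ℝ) * ν.eval β) := by
    rw [hw]
    simp [hTβ]
  rw [hwβ] at e4
  push_cast at e4
  have hc : β - b i ≠ 0 := sub_ne_zero.2 (Ne.symm hi)
  have key : A0 * (ν.eval β) ^ 2 * ((β - b i) * ((m : ℝ) + 2)) = 0 := by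
    linear_combination (1 / 2 : ℝ) * e4
  have hm2 : ((m : ℝ) + 2) ≠ 0 := by positivity
  rcases mul_eq_zero.1 key with h | h
  · rcases mul_eq_zero.1 h with h' | h'
    · exact h'
    · exact absurd h' (pow_ne_zero 2 hνβ)
  · exact absurd h (mul_ne_zero hc hm2)
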